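/- Let ρ and σ be nonzero positive semidefinite operators on a finite-dimensional Hilbert space with supp(ρ) ⊆ supp(σ). Then D∞(ρ‖σ) ≤ log(1 + ‖ρ−σ‖₁ / λ_min(σ)) ≤ ‖ρ−σ‖₁ / λ_min(σ), where λ_min(σ) is the smallest nonzero eigenvalue of σ and D∞(ρ‖σ) := inf{λ ∈ ℝ : ρ ≤ e^λ σ}. -/

import Mathlib

open Matrix
open scoped ComplexOrder

/-- Trace norm of a complex matrix: sum of singular values, i.e. of the square roots of the
eigenvalues of `Aᴴ * A`. -/
noncomputable def traceNorm {d : ℕ} (A : Matrix (Fin d) (Fin d) ℂ) : ℝ :=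
  ∑ i, Real.sqrt ((Matrix.isHermitian_conjTranspose_mul_self A).eigenvalues i)

/-- Max-relative entropy `D∞(ρ‖σ) := inf {λ : ρ ≤ e^λ σ}` (Löwner order). -/
noncomputable def Dmax {d : ℕ} (ρ σ : Matrix (Fin d) (Fin d) ℂ) : ℝ :=
  sInf {l : ℝ | (Real.exp l • σ - ρ).PosSemidef}

/-- Smallest nonzero eigenvalue of a Hermitian matrix. -/
noncomputable def lambdaMin {d : ℕ} (σ : Matrix (Fin d) (Fin d) ℂ)
    (hσ : σ.IsHermitian) : ℝ :=
  sInf {x : ℝ | x ∈ Set.range hσ.eigenvalues ∧ x ≠ 0}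

variable {d : ℕ}

lemma dot_self_eq_normSq (y : Fin d → ℂ) :
    star y ⬝ᵥ y = ((∑ i, Complex.normSq (y i) : ℝ) : ℂ) := by
  simp only [dotProduct, Pi.star_apply, Complex.ofReal_sum, Complex.star_def,
    ← Complex.normSq_eq_conj_mul_self]

lemma quadForm_eq {H : Matrix (Fin d) (Fin d) ℂ} (hH : H.IsHermitian) (v : Fin d → ℂ) :
    star v ⬝ᵥ H *ᵥ v =
      ((∑ i, hH.eigenvalues i *
        Complex.normSq ((star (hH.eigenvectorUnitary : Matrix (Fin d) (Fin d) ℂ) *ᵥ v) i) : ℝ) : ℂ) := by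
  set U : Matrix (Fin d) (Fin d) ℂ := (hH.eigenvectorUnitary : Matrix (Fin d) (Fin d) ℂ) with hU
  set w : Fin d → ℂ := star U *ᵥ v with hw
  have h1 : star v ⬝ᵥ H *ᵥ v = star w ⬝ᵥ (diagonal (RCLike.ofReal ∘ hH.eigenvalues) *ᵥ w) := by
    conv_lhs => rw [hH.spectral_theorem, Unitary.conjStarAlgAut_apply]
    rw [← mulVec_mulVec, ← mulVec_mulVec, dotProduct_mulVec]
    congr 1
    simp [hw, star_mulVec, Matrix.star_eq_conjTranspose, conjTranspose_conjTranspose]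
    rfl
  rw [h1]
  simp only [dotProduct, mulVec_diagonal, Pi.star_apply, Complex.ofReal_sum, Function.comp_apply,
    Complex.star_def]
  refine Finset.sum_congr rfl fun i _ => ?_
  have h2 : (RCLike.ofReal (hH.eigenvalues i) : ℂ) = ((hH.eigenvalues i : ℝ) : ℂ) := rfl
  rw [h2, Complex.ofReal_mul, show (starRingEnd ℂ) (w i) * (((hH.eigenvalues i : ℝ) : ℂ) * w i)
      = ((hH.eigenvalues i : ℝ) : ℂ) * ((starRingEnd ℂ) (w i) * w i) by ring,
    ← Complex.normSq_eq_conj_mul_self]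

lemma normSq_mulVec_unitary (U : Matrix (Fin d) (Fin d) ℂ)
    (hUm : U ∈ Matrix.unitaryGroup (Fin d) ℂ) (x : Fin d → ℂ) :
    ∑ i, Complex.normSq ((U *ᵥ x) i) = ∑ i, Complex.normSq (x i) := by
  have hm := Matrix.mem_unitaryGroup_iff'.mp hUm
  rw [Matrix.star_eq_conjTranspose] at hm
  have key : star (U *ᵥ x) ⬝ᵥ (U *ᵥ x) = star x ⬝ᵥ x := by
    rw [star_mulVec, dotProduct_mulVec, vecMul_vecMul, hm, vecMul_one]
  rw [dot_self_eq_normSq, dot_self_eq_normSq] at key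
  exact_mod_cast key

lemma star_mem_unitary {U : Matrix (Fin d) (Fin d) ℂ}
    (hUm : U ∈ Matrix.unitaryGroup (Fin d) ℂ) : star U ∈ Matrix.unitaryGroup (Fin d) ℂ := by
  rw [Matrix.mem_unitaryGroup_iff, star_star]
  exact Matrix.mem_unitaryGroup_iff'.mp hUm

lemma normSq_eigenvectorBasis {H : Matrix (Fin d) (Fin d) ℂ} (hH : H.IsHermitian) (j : Fin d) :
    ∑ i, Complex.normSq (hH.eigenvectorBasis j i) = 1 := by
  have h := hH.eigenvectorBasis.orthonormal.1 j
  rw [EuclideanSpace.norm_eq, Real.sqrt_eq_one] at h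
  calc ∑ i, Complex.normSq (hH.eigenvectorBasis j i)
      = ∑ i, ‖hH.eigenvectorBasis j i‖ ^ 2 := by
        refine Finset.sum_congr rfl fun i _ => ?_
        rw [← Complex.sq_norm]
    _ = 1 := h

lemma traceNorm_nonneg (A : Matrix (Fin d) (Fin d) ℂ) : 0 ≤ traceNorm A :=
  Finset.sum_nonneg fun _ _ => Real.sqrt_nonneg _

lemma abs_eigenvalue_le_traceNorm {A : Matrix (Fin d) (Fin d) ℂ} (hA : A.IsHermitian) (j : Fin d) :
    |hA.eigenvalues j| ≤ traceNorm A := by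
  set t := traceNorm A with ht
  have ht0 : 0 ≤ t := traceNorm_nonneg A
  have hHAA := Matrix.isHermitian_conjTranspose_mul_self A
  set ν := hHAA.eigenvalues with hν
  have hν0 : ∀ k, 0 ≤ ν k := fun k =>
    (Matrix.posSemidef_conjTranspose_mul_self A).eigenvalues_nonneg k
  have hνt : ∀ k, ν k ≤ t ^ 2 := by
    intro k
    have h1 : Real.sqrt (ν k) ≤ t := by
      rw [ht]
      exact Finset.single_le_sum (f := fun i => Real.sqrt (ν i))
        (fun i _ => Real.sqrt_nonneg _) (Finset.mem_univ k)
    calc ν k = Real.sqrt (ν k) ^ 2 := (Real.sq_sqrt (hν0 k)).symm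
      _ ≤ t ^ 2 := by nlinarith [Real.sqrt_nonneg (ν k)]
  set x : Fin d → ℂ := ⇑(hA.eigenvectorBasis j) with hx
  set μ := hA.eigenvalues j with hμ
  have hAx : A *ᵥ x = μ • x := hA.mulVec_eigenvectorBasis j
  have hxn : ∑ i, Complex.normSq (x i) = 1 := normSq_eigenvectorBasis hA j
  have hq : star x ⬝ᵥ (Aᴴ * A) *ᵥ x = ((μ ^ 2 : ℝ) : ℂ) := by
    rw [← mulVec_mulVec, hAx, mulVec_smul, hA.eq, hAx]
    simp only [dotProduct_smul, dot_self_eq_normSq, hxn, Complex.real_smul]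
    push_cast
    ring
  rw [quadForm_eq hHAA x] at hq
  set w := (star (hHAA.eigenvectorUnitary : Matrix (Fin d) (Fin d) ℂ) *ᵥ x) with hwdef
  have hwn : ∑ i, Complex.normSq (w i) = 1 := by
    rw [hwdef, normSq_mulVec_unitary _ (star_mem_unitary hHAA.eigenvectorUnitary.2), hxn]
  have hq' : μ ^ 2 = ∑ i, ν i * Complex.normSq (w i) := by
    exact_mod_cast hq.symm
  have hle : μ ^ 2 ≤ t ^ 2 := by
    rw [hq']
    calc ∑ i, ν i * Complex.normSq (w i) ≤ ∑ i, t ^ 2 * Complex.normSq (w i) := by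
          refine Finset.sum_le_sum fun i _ => ?_
          exact mul_le_mul_of_nonneg_right (hνt i) (Complex.normSq_nonneg _)
      _ = t ^ 2 := by rw [← Finset.mul_sum, hwn, mul_one]
  calc |μ| = Real.sqrt (μ ^ 2) := (Real.sqrt_sq_eq_abs μ).symm
    _ ≤ Real.sqrt (t ^ 2) := Real.sqrt_le_sqrt hle
    _ = t := by rw [Real.sqrt_sq ht0]

lemma eig_congr {M N : Matrix (Fin d) (Fin d) ℂ} (h : M = N) (hM : M.IsHermitian)
    (hN : N.IsHermitian) : hM.eigenvalues = hN.eigenvalues := by subst h; rfl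

lemma traceNorm_neg (B : Matrix (Fin d) (Fin d) ℂ) : traceNorm (-B) = traceNorm B := by
  unfold traceNorm
  refine Finset.sum_congr rfl fun i _ => ?_
  congr 1
  exact congrFun (eig_congr (by simp) _ _) i

/-- the key positive semidefiniteness fact -/
lemma key_psd {ρ σ : Matrix (Fin d) (Fin d) ℂ} (hρ : ρ.PosSemidef) (hσ : σ.PosSemidef)
    (hsupp : ∀ v : Fin d → ℂ, σ.mulVec v = 0 → ρ.mulVec v = 0)
    {lam : ℝ} (hlam : 0 < lam)
    (hlam_le : ∀ i, hσ.1.eigenvalues i ≠ 0 → lam ≤ hσ.1.eigenvalues i) :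
    ((1 + traceNorm (ρ - σ) / lam) • σ - ρ).PosSemidef := by
  classical
  set t := traceNorm (ρ - σ) with htdef
  have ht0 : 0 ≤ t := traceNorm_nonneg _
  set c : ℝ := 1 + t / lam with hcdef
  have hA : (σ - ρ).IsHermitian := hσ.1.sub hρ.1
  have hAeig : ∀ j, -t ≤ hA.eigenvalues j := by
    intro j
    have h1 := abs_eigenvalue_le_traceNorm hA j
    have h2 : traceNorm (σ - ρ) = t := by
      rw [htdef, ← traceNorm_neg (ρ - σ), neg_sub]
    rw [h2] at h1
    linarith [neg_abs_le (hA.eigenvalues j)]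
  have hsmul : (c • σ : Matrix (Fin d) (Fin d) ℂ) = (c : ℂ) • σ := by
    ext i j
    simp [Complex.real_smul]
  rw [posSemidef_iff_dotProduct_mulVec]
  constructor
  · -- Hermitian
    rw [hsmul]
    show ((c : ℂ) • σ - ρ)ᴴ = _
    rw [conjTranspose_sub, conjTranspose_smul, hρ.1.eq, hσ.1.eq, Complex.star_def,
      Complex.conj_ofReal]
  intro v
  -- set up spectral data of σ
  set U : Matrix (Fin d) (Fin d) ℂ := (hσ.1.eigenvectorUnitary : Matrix (Fin d) (Fin d) ℂ) with hUdef
  have hUm : U ∈ Matrix.unitaryGroup (Fin d) ℂ := hσ.1.eigenvectorUnitary.2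
  set eig := hσ.1.eigenvalues with heigdef
  set w : Fin d → ℂ := star U *ᵥ v with hwdef
  set w₁ : Fin d → ℂ := fun i => if eig i = 0 then 0 else w i with hw₁def
  set w₂ : Fin d → ℂ := fun i => if eig i = 0 then w i else 0 with hw₂def
  have hw12 : w₁ + w₂ = w := by
    funext i
    by_cases h : eig i = 0 <;> simp [hw₁def, hw₂def, h]
  set v₁ : Fin d → ℂ := U *ᵥ w₁ with hv₁def
  set v₂ : Fin d → ℂ := U *ᵥ w₂ with hv₂def
  have hUU : U * star U = 1 := Matrix.mem_unitaryGroup_iff.mp hUm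
  have hUU' : star U * U = 1 := Matrix.mem_unitaryGroup_iff'.mp hUm
  have hv : v = v₁ + v₂ := by
    rw [hv₁def, hv₂def, ← mulVec_add, hw12, hwdef, mulVec_mulVec, hUU, one_mulVec]
  have hσv₂ : σ *ᵥ v₂ = 0 := by
    conv_lhs => rw [hσ.1.spectral_theorem, Unitary.conjStarAlgAut_apply]
    rw [hv₂def, mulVec_mulVec,
      Matrix.mul_assoc ((hσ.1.eigenvectorUnitary : Matrix (Fin d) (Fin d) ℂ)
        * diagonal (RCLike.ofReal ∘ hσ.1.eigenvalues))
        (star (hσ.1.eigenvectorUnitary : Matrix (Fin d) (Fin d) ℂ)) U,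
      hUU', Matrix.mul_one, ← mulVec_mulVec]
    have : diagonal (RCLike.ofReal ∘ eig) *ᵥ w₂ = 0 := by
      funext i
      by_cases h : eig i = 0 <;>
        simp [mulVec_diagonal, hw₂def, h, Function.comp]
    rw [this, mulVec_zero]
  have hρv₂ : ρ *ᵥ v₂ = 0 := hsupp v₂ hσv₂
  have hAv₂ : (σ - ρ) *ᵥ v₂ = 0 := by rw [sub_mulVec, hσv₂, hρv₂, sub_zero]
  -- quad of A over v equals quad over v₁
  have hQA : star v ⬝ᵥ (σ - ρ) *ᵥ v = star v₁ ⬝ᵥ (σ - ρ) *ᵥ v₁ := by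
    conv_lhs => rw [hv]
    rw [mulVec_add, hAv₂, add_zero, star_add, add_dotProduct]
    have hz : star v₂ ⬝ᵥ (σ - ρ) *ᵥ v₁ = 0 := by
      rw [dotProduct_mulVec, ← hA.eq, ← star_mulVec, hAv₂, star_zero, zero_dotProduct]
    rw [hz, add_zero]
  -- real values
  set z : Fin d → ℂ := star (hA.eigenvectorUnitary : Matrix (Fin d) (Fin d) ℂ) *ᵥ v₁ with hzdef
  have hQA2 : star v₁ ⬝ᵥ (σ - ρ) *ᵥ v₁
      = ((∑ i, hA.eigenvalues i * Complex.normSq (z i) : ℝ) : ℂ) := quadForm_eq hA v₁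
  have hQσ : star v ⬝ᵥ σ *ᵥ v = ((∑ i, eig i * Complex.normSq (w i) : ℝ) : ℂ) := quadForm_eq hσ.1 v
  set N₁ : ℝ := ∑ i, Complex.normSq (w₁ i) with hN₁def
  have hN₁v : ∑ i, Complex.normSq (v₁ i) = N₁ := normSq_mulVec_unitary U hUm w₁
  have hN₁z : ∑ i, Complex.normSq (z i) = N₁ := by
    rw [hzdef, normSq_mulVec_unitary _ (star_mem_unitary hA.eigenvectorUnitary.2), hN₁v]
  have hN₁0 : 0 ≤ N₁ := Finset.sum_nonneg fun i _ => Complex.normSq_nonneg _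
  -- bounds
  have hSA : -t * N₁ ≤ ∑ i, hA.eigenvalues i * Complex.normSq (z i) := by
    rw [← hN₁z, Finset.mul_sum]
    exact Finset.sum_le_sum fun i _ =>
      mul_le_mul_of_nonneg_right (hAeig i) (Complex.normSq_nonneg _)
  have hSσ : lam * N₁ ≤ ∑ i, eig i * Complex.normSq (w i) := by
    rw [hN₁def, Finset.mul_sum]
    refine Finset.sum_le_sum fun i _ => ?_
    by_cases h : eig i = 0
    · simp [hw₁def, h]
    · have : w₁ i = w i := by simp [hw₁def, h]
      rw [this]
      exact mul_le_mul_of_nonneg_right (hlam_le i h) (Complex.normSq_nonneg _)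
  -- conclusion
  have hexpand : star v ⬝ᵥ ((1 + t / lam) • σ - ρ) *ᵥ v
      = (((t / lam) * (∑ i, eig i * Complex.normSq (w i))
          + (∑ i, hA.eigenvalues i * Complex.normSq (z i)) : ℝ) : ℂ) := by
    have hsmul2 : ((t / lam) • σ : Matrix (Fin d) (Fin d) ℂ) = ((t / lam : ℝ) : ℂ) • σ := by
      ext i j
      simp [Complex.real_smul]
    rw [show ((1 + t / lam) • σ - ρ) = (t / lam) • σ + (σ - ρ) by
      rw [add_smul, one_smul]; abel]
    rw [hsmul2, add_mulVec, dotProduct_add, smul_mulVec, dotProduct_smul, hQσ,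
      hQA, hQA2]
    rw [smul_eq_mul]
    push_cast
    ring
  rw [hexpand]
  rw [Complex.zero_le_real]
  have h1 : (t / lam) * (lam * N₁) ≤ (t / lam) * (∑ i, eig i * Complex.normSq (w i)) :=
    mul_le_mul_of_nonneg_left hSσ (div_nonneg ht0 hlam.le)
  have h2 : (t / lam) * (lam * N₁) = t * N₁ := by
    field_simp
  nlinarith [hSA, h1]

lemma exists_eig_ne {M : Matrix (Fin d) (Fin d) ℂ} (hM : M.IsHermitian) (h0 : M ≠ 0) :
    ∃ i, hM.eigenvalues i ≠ 0 := by
  by_contra h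
  push_neg at h
  apply h0
  have hdiag : diagonal (RCLike.ofReal ∘ hM.eigenvalues) = (0 : Matrix (Fin d) (Fin d) ℂ) := by
    ext i j
    by_cases hij : i = j <;> simp [diagonal, hij, h]
  rw [hM.spectral_theorem, Unitary.conjStarAlgAut_apply, hdiag, Matrix.mul_zero, Matrix.zero_mul]

theorem stmt0 {d : ℕ} (ρ σ : Matrix (Fin d) (Fin d) ℂ)
    (hρ : ρ.PosSemidef) (hσ : σ.PosSemidef) (hρ0 : ρ ≠ 0) (hσ0 : σ ≠ 0)
    (hsupp : ∀ v : Fin d → ℂ, σ.mulVec v = 0 → ρ.mulVec v = 0) :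
    Dmax ρ σ ≤ Real.log (1 + traceNorm (ρ - σ) / lambdaMin σ hσ.1) ∧
    Real.log (1 + traceNorm (ρ - σ) / lambdaMin σ hσ.1) ≤
      traceNorm (ρ - σ) / lambdaMin σ hσ.1 := by
  classical
  set t := traceNorm (ρ - σ) with htdef
  have ht0 : 0 ≤ t := traceNorm_nonneg _
  set lam := lambdaMin σ hσ.1 with hlamdef
  set S : Set ℝ := {x : ℝ | x ∈ Set.range hσ.1.eigenvalues ∧ x ≠ 0} with hSdef
  obtain ⟨i₀, hi₀⟩ := exists_eig_ne hσ.1 hσ0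
  have hne : S.Nonempty := ⟨hσ.1.eigenvalues i₀, ⟨i₀, rfl⟩, hi₀⟩
  have hfin : S.Finite := (Set.finite_range _).subset fun x hx => hx.1
  have hmem : lam ∈ S := hne.csInf_mem hfin
  have hlam_pos : 0 < lam := by
    obtain ⟨⟨i, hi⟩, hlne⟩ := hmem
    have : 0 ≤ lam := hi ▸ hσ.eigenvalues_nonneg i
    exact lt_of_le_of_ne this (Ne.symm hlne)
  have hlam_le : ∀ i, hσ.1.eigenvalues i ≠ 0 → lam ≤ hσ.1.eigenvalues i := fun i hi =>
    csInf_le hfin.bddBelow ⟨⟨i, rfl⟩, hi⟩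
  have hc0 : 0 ≤ t / lam := div_nonneg ht0 hlam_pos.le
  have hpos : (0 : ℝ) < 1 + t / lam := by linarith
  constructor
  · -- Dmax bound
    apply csInf_le
    · -- BddBelow
      obtain ⟨j, hj⟩ := exists_eig_ne hρ.1 hρ0
      set r := hρ.1.eigenvalues j with hrdef
      have hr : 0 < r := lt_of_le_of_ne (hρ.eigenvalues_nonneg j) (Ne.symm hj)
      set x : Fin d → ℂ := ⇑(hρ.1.eigenvectorBasis j) with hxdef
      have hρx : ρ *ᵥ x = r • x := hρ.1.mulVec_eigenvectorBasis j
      have hxn : ∑ i, Complex.normSq (x i) = 1 := normSq_eigenvectorBasis hρ.1 j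
      have hx0 : x ≠ 0 := by
        intro h
        rw [h] at hxn
        simp at hxn
      have hρq : star x ⬝ᵥ ρ *ᵥ x = ((r : ℝ) : ℂ) := by
        rw [hρx]
        simp only [dotProduct_smul, dot_self_eq_normSq, hxn, Complex.real_smul]
        push_cast
        ring
      have hq0 : 0 ≤ star x ⬝ᵥ σ *ᵥ x := hσ.dotProduct_mulVec_nonneg x
      set q := star x ⬝ᵥ σ *ᵥ x with hqdef
      set s := q.re with hsdef
      have hqs : q = ((s : ℝ) : ℂ) := by
        have him := (Complex.nonneg_iff.mp hq0).2
        exact Complex.ext rfl him.symm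
      have hs0 : 0 ≤ s := (Complex.nonneg_iff.mp hq0).1
      have hs : 0 < s := by
        rcases hs0.lt_or_eq with h | h
        · exact h
        · exfalso
          have hqz : q = 0 := by rw [hqs, ← h]; simp
          have hσx : σ *ᵥ x = 0 := (hσ.dotProduct_mulVec_zero_iff x).mp hqz
          have hρxz : ρ *ᵥ x = 0 := hsupp x hσx
          rw [hρx] at hρxz
          rcases smul_eq_zero.mp hρxz with h' | h'
          · exact hj h'
          · exact hx0 h'
      refine ⟨Real.log (r / s), fun l hl => ?_⟩
      have hsm : (Real.exp l • σ : Matrix (Fin d) (Fin d) ℂ) = ((Real.exp l : ℝ) : ℂ) • σ := by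
        ext i j'
        simp [Complex.real_smul]
      have h0 := hl.dotProduct_mulVec_nonneg x
      rw [hsm, sub_mulVec, dotProduct_sub, smul_mulVec, dotProduct_smul, hρq, ← hqdef,
        hqs, smul_eq_mul] at h0
      have hre : 0 ≤ Real.exp l * s - r := by
        have : ((Real.exp l * s - r : ℝ) : ℂ) = ((Real.exp l : ℝ) : ℂ) * ((s : ℝ) : ℂ) - ((r : ℝ) : ℂ) := by
          push_cast; ring
        rw [← this] at h0
        exact_mod_cast h0
      have hrs : r / s ≤ Real.exp l := by
        rw [div_le_iff₀ hs]
        linarith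
      exact (Real.log_le_iff_le_exp (div_pos hr hs)).mpr hrs
    · -- membership
      show (Real.exp (Real.log (1 + t / lam)) • σ - ρ).PosSemidef
      rw [Real.exp_log hpos]
      exact key_psd hρ hσ hsupp hlam_pos hlam_le
  · have := Real.log_le_sub_one_of_pos hpos
    linarith
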